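/- arXiv:2112.13484 — 3 statements merged into one kernel-verified Lean document; each statement's English description precedes it below -/
import Mathlib

section
/- Consider ẋ = F(t)x with F piecewise continuous and ‖F(t)‖ ≤ α e^{−λt} for constants α, λ > 0. Then for every initial condition x(0), the solution x(t) converges to a limit x* ∈ ℝⁿ as t → ∞, and moreover ‖x(t) − x*‖ decays exponentially with rate λ, i.e., there exists C > 0 with ‖x(t) − x*‖ ≤ C e^{−λt} for all t ≥ 0. -/
open Matrix Filter

/-- If ẋ = F(t)x with ‖F(t)‖ ≤ α e^{−λt}, then x(t) converges to some
x* as t → ∞, and ‖x(t) − x*‖ ≤ C e^{−λt} for some C > 0. -/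
theorem stmt1 {n : ℕ} (F : ℝ → Matrix (Fin n) (Fin n) ℝ)
    (x : ℝ → EuclideanSpace ℝ (Fin n))
    (α lam : ℝ) (hα : 0 < α) (hlam : 0 < lam)
    (hF : ∀ t ≥ (0:ℝ), ‖Matrix.toEuclideanCLM (𝕜 := ℝ) (F t)‖ ≤ α * Real.exp (-lam * t))
    (hx : ∀ t ≥ (0:ℝ), HasDerivAt x (Matrix.toEuclideanCLM (𝕜 := ℝ) (F t) (x t)) t) :
    ∃ xstar : EuclideanSpace ℝ (Fin n),
      Tendsto x atTop (nhds xstar) ∧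
      ∃ C > (0:ℝ), ∀ t ≥ (0:ℝ), ‖x t - xstar‖ ≤ C * Real.exp (-lam * t) := by
  set A : ℝ → EuclideanSpace ℝ (Fin n) →L[ℝ] EuclideanSpace ℝ (Fin n) :=
    fun t => Matrix.toEuclideanCLM (𝕜 := ℝ) (F t) with hA
  set r : ℝ := Real.exp (-lam) with hrdef
  have hr0 : 0 < r := Real.exp_pos _
  have hr1 : r < 1 := Real.exp_lt_one_iff.mpr (by linarith)
  -- Gronwall step on [a, a+1]
  have key : ∀ a : ℝ, 0 ≤ a → ∀ t ∈ Set.Icc a (a + 1),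
      ‖x t‖ ≤ ‖x a‖ * Real.exp (α * Real.exp (-lam * a) * (t - a)) := by
    intro a ha t ht
    have H := norm_le_gronwallBound_of_norm_deriv_right_le
      (f := x) (f' := fun u => A u (x u)) (δ := ‖x a‖) (K := α * Real.exp (-lam * a))
      (ε := 0) (a := a) (b := a + 1)
      (fun u hu => ((hx u (le_trans ha hu.1)).continuousAt).continuousWithinAt)
      (fun u hu => ((hx u (le_trans ha hu.1)).hasDerivWithinAt))
      le_rfl
      (fun u hu => by
        have hu0 : (0:ℝ) ≤ u := le_trans ha hu.1
        have h1 : ‖A u (x u)‖ ≤ ‖A u‖ * ‖x u‖ := (A u).le_opNorm _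
        have h2 : ‖A u‖ ≤ α * Real.exp (-lam * u) := hF u hu0
        have h3 : Real.exp (-lam * u) ≤ Real.exp (-lam * a) :=
          Real.exp_le_exp.mpr (by nlinarith [hu.1])
        have h4 : ‖A u‖ * ‖x u‖ ≤ (α * Real.exp (-lam * a)) * ‖x u‖ := by
          apply mul_le_mul_of_nonneg_right _ (norm_nonneg _)
          exact h2.trans (by nlinarith)
        simpa using h1.trans h4)
      t ht
    rwa [gronwallBound_ε0] at H
  -- bound at natural numbers
  have hnat : ∀ k : ℕ, ‖x k‖ ≤ ‖x 0‖ * Real.exp (α * ∑ j ∈ Finset.range k, r ^ j) := by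
    intro k
    induction k with
    | zero => simp
    | succ k ih =>
      have hk0 : (0:ℝ) ≤ (k:ℝ) := Nat.cast_nonneg _
      have hmem : ((k:ℝ) + 1) ∈ Set.Icc (k:ℝ) ((k:ℝ) + 1) := by
        constructor <;> linarith
      have h1 := key k hk0 ((k:ℝ) + 1) hmem
      have hrk : Real.exp (-lam * (k:ℝ)) = r ^ k := by
        rw [hrdef, ← Real.exp_nat_mul]; ring_nf
      rw [hrk] at h1
      have h2 : ‖x ((k:ℝ) + 1)‖ ≤ (‖x 0‖ * Real.exp (α * ∑ j ∈ Finset.range k, r ^ j)) *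
          Real.exp (α * r ^ k * ((k:ℝ) + 1 - k)) := by
        refine h1.trans (mul_le_mul_of_nonneg_right ih (Real.exp_pos _).le)
      have h3 : ((k:ℕ):ℝ) + 1 = ((k+1 : ℕ):ℝ) := by push_cast; ring
      calc ‖x ((k+1:ℕ):ℝ)‖ = ‖x ((k:ℝ) + 1)‖ := by rw [← h3]
        _ ≤ (‖x 0‖ * Real.exp (α * ∑ j ∈ Finset.range k, r ^ j)) *
            Real.exp (α * r ^ k * ((k:ℝ) + 1 - k)) := h2
        _ = ‖x 0‖ * Real.exp (α * ∑ j ∈ Finset.range (k+1), r ^ j) := by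
            rw [Finset.sum_range_succ, mul_assoc, ← Real.exp_add]
            congr 2
            ring
  have hsum : ∀ k : ℕ, ∑ j ∈ Finset.range k, r ^ j ≤ 1 / (1 - r) := by
    intro k
    rw [geom_sum_eq hr1.ne]
    have h1 : (r ^ k - 1) / (r - 1) = (1 - r ^ k) / (1 - r) := by
      rw [← neg_div_neg_eq]; ring_nf
    rw [h1, div_le_div_iff₀ (by linarith) (by linarith)]
    nlinarith [pow_pos hr0 k]
  set M : ℝ := ‖x 0‖ * Real.exp (α / (1 - r)) with hMdef
  have hM0 : 0 ≤ M := mul_nonneg (norm_nonneg _) (Real.exp_pos _).le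
  -- global bound
  have hM : ∀ t ≥ (0:ℝ), ‖x t‖ ≤ M := by
    intro t ht
    set k : ℕ := ⌊t⌋₊ with hk
    have hk1 : (k:ℝ) ≤ t := Nat.floor_le ht
    have hk2 : t ≤ (k:ℝ) + 1 := (Nat.lt_floor_add_one t).le
    have h1 := key k (Nat.cast_nonneg _) t ⟨hk1, hk2⟩
    have hrk : Real.exp (-lam * (k:ℝ)) = r ^ k := by
      rw [hrdef, ← Real.exp_nat_mul]; ring_nf
    rw [hrk] at h1
    have h2 : ‖x t‖ ≤ (‖x 0‖ * Real.exp (α * ∑ j ∈ Finset.range k, r ^ j)) *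
        Real.exp (α * r ^ k * (t - k)) :=
      h1.trans (mul_le_mul_of_nonneg_right (hnat k) (Real.exp_pos _).le)
    have h3 : α * (∑ j ∈ Finset.range k, r ^ j) + α * r ^ k * (t - k) ≤ α / (1 - r) := by
      have hs := hsum (k + 1)
      rw [Finset.sum_range_succ] at hs
      have hrk0 : (0:ℝ) < r ^ k := pow_pos hr0 k
      have ht1 : t - k ≤ 1 := by linarith
      have ht0 : (0:ℝ) ≤ t - k := by linarith
      have : α * r ^ k * (t - k) ≤ α * r ^ k := by
        nlinarith [mul_nonneg (mul_pos hα hrk0).le (sub_nonneg.2 ht1)]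
      have h4 : α * (∑ j ∈ Finset.range k, r ^ j + r ^ k) ≤ α * (1 / (1 - r)) :=
        mul_le_mul_of_nonneg_left hs hα.le
      rw [mul_one_div] at h4
      nlinarith
    calc ‖x t‖ ≤ (‖x 0‖ * Real.exp (α * ∑ j ∈ Finset.range k, r ^ j)) *
          Real.exp (α * r ^ k * (t - k)) := h2
      _ = ‖x 0‖ * Real.exp (α * (∑ j ∈ Finset.range k, r ^ j) + α * r ^ k * (t - k)) := by
          rw [mul_assoc, ← Real.exp_add]
      _ ≤ M := by
          rw [hMdef]
          exact mul_le_mul_of_nonneg_left (Real.exp_le_exp.mpr h3) (norm_nonneg _)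
  -- the derivative
  set g : ℝ → EuclideanSpace ℝ (Fin n) := deriv x with hgdef
  have hg : ∀ t ≥ (0:ℝ), g t = A t (x t) := fun t ht => (hx t ht).deriv
  have hgd : ∀ t ≥ (0:ℝ), HasDerivAt x (g t) t := by
    intro t ht; rw [hg t ht]; exact hx t ht
  have hgbound : ∀ u ≥ (0:ℝ), ‖g u‖ ≤ α * M * Real.exp (-lam * u) := by
    intro u hu
    rw [hg u hu]
    calc ‖A u (x u)‖ ≤ ‖A u‖ * ‖x u‖ := (A u).le_opNorm _
      _ ≤ (α * Real.exp (-lam * u)) * M := by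
          apply mul_le_mul (hF u hu) (hM u hu) (norm_nonneg _)
          positivity
      _ = α * M * Real.exp (-lam * u) := by ring
  have hBint : MeasureTheory.IntegrableOn (fun u => α * M * Real.exp (-lam * u))
      (Set.Ioi (0:ℝ)) := ((exp_neg_integrableOn_Ioi 0 hlam).const_mul (α * M))
  have hgint : ∀ t ≥ (0:ℝ), MeasureTheory.IntegrableOn g (Set.Ioi t) := by
    intro t ht
    refine MeasureTheory.Integrable.mono'
      ((hBint.mono_set (Set.Ioi_subset_Ioi ht)))
      ((stronglyMeasurable_deriv x).aestronglyMeasurable.restrict) ?_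
    exact (MeasureTheory.ae_restrict_iff' measurableSet_Ioi).2
      (MeasureTheory.ae_of_all _ fun u hu => hgbound u (le_of_lt (lt_of_le_of_lt ht hu)))
  set xstar : EuclideanSpace ℝ (Fin n) := x 0 + ∫ u in Set.Ioi (0:ℝ), g u with hxs
  -- tail formula
  have key2 : ∀ t ≥ (0:ℝ), x t - xstar = -(∫ u in Set.Ioi t, g u) := by
    intro t ht
    have hii : IntervalIntegrable g MeasureTheory.volume 0 t := by
      rw [intervalIntegrable_iff_integrableOn_Ioc_of_le ht]
      exact (hgint 0 le_rfl).mono_set Set.Ioc_subset_Ioi_self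
    have hftc : ∫ u in (0:ℝ)..t, g u = x t - x 0 := by
      refine intervalIntegral.integral_eq_sub_of_hasDerivAt (fun u hu => ?_) hii
      rw [Set.uIcc_of_le ht] at hu
      exact hgd u hu.1
    have hsplit : (∫ u in Set.Ioi (0:ℝ), g u) =
        (∫ u in Set.Ioc (0:ℝ) t, g u) + ∫ u in Set.Ioi t, g u := by
      rw [← MeasureTheory.setIntegral_union (Set.Ioc_disjoint_Ioi le_rfl)
        measurableSet_Ioi ((hgint 0 le_rfl).mono_set Set.Ioc_subset_Ioi_self)
        (hgint t ht), Set.Ioc_union_Ioi_eq_Ioi ht]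
    have hioc : ∫ u in (0:ℝ)..t, g u = ∫ u in Set.Ioc (0:ℝ) t, g u :=
      intervalIntegral.integral_of_le ht
    rw [hxs, hsplit, ← hioc, hftc]
    abel
  -- the tail integral of the bound
  have hIioi : ∀ t : ℝ, (∫ u in Set.Ioi t, Real.exp (-lam * u)) = Real.exp (-lam * t) / lam := by
    intro t
    have hderiv : ∀ u ∈ Set.Ici t, HasDerivAt (fun v => -Real.exp (-lam * v) / lam)
        (Real.exp (-lam * u)) u := by
      intro u _
      simpa [hlam.ne', neg_mul] using
        (((hasDerivAt_id u).const_mul lam).neg.exp.neg.div_const lam)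
    have htend : Tendsto (fun v => -Real.exp (-lam * v) / lam) atTop (nhds (-0 / lam)) := by
      refine Tendsto.div_const (Tendsto.neg ?_) _
      exact Real.tendsto_exp_atBot.comp (tendsto_id.const_mul_atTop_of_neg (by linarith))
    have := MeasureTheory.integral_Ioi_of_hasDerivAt_of_tendsto' hderiv
      (exp_neg_integrableOn_Ioi t hlam) htend
    rw [this]
    field_simp
    ring
  have htail : ∀ t ≥ (0:ℝ), ‖x t - xstar‖ ≤ (α * M / lam) * Real.exp (-lam * t) := by
    intro t ht
    rw [key2 t ht, norm_neg]
    have h1 : ‖∫ u in Set.Ioi t, g u‖ ≤ ∫ u in Set.Ioi t, α * M * Real.exp (-lam * u) := by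
      refine MeasureTheory.norm_integral_le_of_norm_le
        (hBint.mono_set (Set.Ioi_subset_Ioi ht)) ?_
      exact (MeasureTheory.ae_restrict_iff' measurableSet_Ioi).2
        (MeasureTheory.ae_of_all _ fun u hu => hgbound u (le_of_lt (lt_of_le_of_lt ht hu)))
    have h2 : (∫ u in Set.Ioi t, α * M * Real.exp (-lam * u)) =
        (α * M / lam) * Real.exp (-lam * t) := by
      rw [MeasureTheory.integral_const_mul, hIioi t]
      field_simp
    rw [h2] at h1
    exact h1
  refine ⟨xstar, ?_, α * M / lam + 1, by positivity, fun t ht => ?_⟩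
  · rw [tendsto_iff_norm_sub_tendsto_zero]
    have hexp : Tendsto (fun t => (α * M / lam) * Real.exp (-lam * t)) atTop (nhds 0) := by
      have h0 : Tendsto (fun t : ℝ => Real.exp (-lam * t)) atTop (nhds 0) :=
        Real.tendsto_exp_atBot.comp (tendsto_id.const_mul_atTop_of_neg (by linarith))
      simpa using h0.const_mul (α * M / lam)
    refine squeeze_zero' ?_ ?_ hexp
    · exact Filter.eventually_atTop.2 ⟨0, fun t ht => norm_nonneg _⟩
    · exact Filter.eventually_atTop.2 ⟨0, fun t ht => htail t ht⟩
  · refine (htail t ht).trans ?_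
    have : (0:ℝ) < Real.exp (-lam * t) := Real.exp_pos _
    nlinarith [mul_nonneg (mul_nonneg hα.le hM0) (le_of_lt hlam)]
end

section
/- Let Φ ∈ ℝʳˣʳ and M ∈ ℝʳˣʳ have disjoint spectra, let Ψ ∈ ℝ^{1×r}, N ∈ ℝʳ, with (Ψ, Φ) observable and (M, N) controllable. Then the unique solution T of the Sylvester equation TΦ − MT = NΨ is nonsingular. -/
open Matrix Polynomial Finset

private lemma isUnit_of_rank_eq_card {r : ℕ} (A : Matrix (Fin r) (Fin r) ℝ) (h : A.rank = r) :
    IsUnit A := by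
  rw [← Matrix.mulVec_surjective_iff_isUnit]
  have h1 : LinearMap.range A.mulVecLin = ⊤ := by
    apply Submodule.eq_top_of_finrank_eq
    rw [← Matrix.rank, h, Module.finrank_pi]
    simp
  have := LinearMap.range_eq_top.mp h1
  exact this

private lemma isRoot_charpoly_of_mem_spectrum {r : ℕ} (A : Matrix (Fin r) (Fin r) ℂ) (μ : ℂ)
    (h : μ ∈ spectrum ℂ A) : A.charpoly.IsRoot μ := by
  rw [spectrum.mem_iff] at h
  have heval : A.charpoly.eval μ = (scalar (Fin r) μ - A).det := by
    rw [Matrix.charpoly, eval_det, matPolyEquiv_charmatrix]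
    simp
  rw [IsRoot, heval]
  by_contra hne
  apply h
  rw [Matrix.isUnit_iff_isUnit_det, isUnit_iff_ne_zero]
  have : algebraMap ℂ (Matrix (Fin r) (Fin r) ℂ) μ = scalar (Fin r) μ := rfl
  rw [this]
  exact hne

private lemma key_pow {r : ℕ} (Φ M T G : Matrix (Fin r) (Fin r) ℝ)
    (hT : T * Φ - M * T = G) (k : ℕ) :
    T * Φ ^ k - M ^ k * T = ∑ j ∈ Finset.range k, M ^ j * G * Φ ^ (k - 1 - j) := by
  induction k with
  | zero => simp
  | succ k ih =>
    have e1 : T * Φ ^ (k + 1) - M ^ (k + 1) * T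
        = (T * Φ ^ k - M ^ k * T) * Φ + M ^ k * (T * Φ - M * T) := by
      rw [pow_succ, pow_succ]
      noncomm_ring
    rw [e1, ih, hT, Finset.sum_mul, Finset.sum_range_succ]
    congr 1
    · refine Finset.sum_congr rfl fun j hj => ?_
      rw [Finset.mem_range] at hj
      have h2 : k + 1 - 1 - j = (k - 1 - j) + 1 := by omega
      rw [h2, pow_succ, ← mul_assoc]
    · simp

private lemma sum_reindex {α : Type*} [AddCommGroup α] [Module ℝ α] (r : ℕ) (a : ℕ → ℝ)
    (f : ℕ → ℕ → α) (ha : ∀ m, r < m → a m = 0) :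
    ∑ k ∈ Finset.range (r + 1), a k • ∑ j ∈ Finset.range k, f j (k - 1 - j)
      = ∑ u ∈ Finset.range r, ∑ v ∈ Finset.range r, a (u + v + 1) • f u v := by
  have step1 : ∑ k ∈ Finset.range (r + 1), a k • ∑ j ∈ Finset.range k, f j (k - 1 - j)
      = ∑ k ∈ Finset.range r, ∑ j ∈ Finset.range (k + 1), a (k + 1) • f j (k - j) := by
    rw [Finset.sum_range_succ']
    simp [Finset.smul_sum]
  rw [step1]
  have step2 : ∀ k, ∑ j ∈ Finset.range (k + 1), a (k + 1) • f j (k - j)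
      = ∑ ij ∈ Finset.HasAntidiagonal.antidiagonal k, a (ij.1 + ij.2 + 1) • f ij.1 ij.2 := by
    intro k
    rw [Finset.Nat.sum_antidiagonal_eq_sum_range_succ_mk]
    refine Finset.sum_congr rfl fun j hj => ?_
    rw [Finset.mem_range] at hj
    congr 2
    omega
  simp only [step2]
  have hdisj : ((Finset.range r : Finset ℕ) : Set ℕ).PairwiseDisjoint Finset.HasAntidiagonal.antidiagonal := by
    intro x _ y _ hxy
    simp only [Finset.disjoint_left, Finset.HasAntidiagonal.mem_antidiagonal]
    intro p hp hq
    exact hxy (by omega)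
  rw [← Finset.sum_biUnion hdisj]
  have hset : (Finset.range r).biUnion Finset.HasAntidiagonal.antidiagonal
      = (Finset.range r ×ˢ Finset.range r).filter (fun p => p.1 + p.2 < r) := by
    ext ⟨u, v⟩
    simp only [Finset.mem_biUnion, Finset.mem_range, Finset.HasAntidiagonal.mem_antidiagonal,
      Finset.mem_filter, Finset.mem_product]
    constructor
    · rintro ⟨k, hk, rfl⟩; omega
    · rintro ⟨⟨hu, hv⟩, h⟩; exact ⟨u + v, h, rfl⟩
  rw [hset, Finset.sum_filter, Finset.sum_product]
  refine Finset.sum_congr rfl fun u hu => Finset.sum_congr rfl fun v hv => ?_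
  rw [Finset.mem_range] at hu hv
  by_cases h : u + v < r
  · rw [if_pos h]
  · rw [if_neg h, ha (u + v + 1) (by omega), zero_smul]

/-- If Φ and M have disjoint spectra, (Ψ,Φ) is observable and (M,N) is
controllable, then the (unique) solution T of TΦ − MT = NΨ is nonsingular. -/
theorem stmt11 {r : ℕ} (Φ M : Matrix (Fin r) (Fin r) ℝ)
    (Ψ : Matrix (Fin 1) (Fin r) ℝ) (N : Matrix (Fin r) (Fin 1) ℝ)
    (hspec : ∀ μ : ℂ, ¬((Matrix.charpoly (Φ.map (Complex.ofReal ·))).IsRoot μ ∧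
      (Matrix.charpoly (M.map (Complex.ofReal ·))).IsRoot μ))
    (hobs : (Matrix.of (fun i j : Fin r => (Ψ * Φ ^ (i : ℕ)) 0 j)).rank = r)
    (hctrb : (Matrix.of (fun i j : Fin r => (M ^ (j : ℕ) * N) i 0)).rank = r)
    (T : Matrix (Fin r) (Fin r) ℝ)
    (hT : T * Φ - M * T = N * Ψ) :
    IsUnit T := by
  rcases Nat.eq_zero_or_pos r with hr | hr
  · subst hr
    rw [Matrix.isUnit_iff_isUnit_det, Matrix.det_isEmpty]
    exact isUnit_one
  classical
  set p : Polynomial ℝ := Φ.charpoly with hp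
  have hpdeg : p.natDegree = r := by
    rw [hp, Matrix.charpoly_natDegree_eq_dim, Fintype.card_fin]
  have hpmonic : p.Monic := Matrix.charpoly_monic Φ
  set a : ℕ → ℝ := fun k => p.coeff k with ha
  have ha0 : ∀ m, r < m → a m = 0 := fun m hm =>
    Polynomial.coeff_eq_zero_of_natDegree_lt (by omega)
  have har : a r = 1 := by
    have := hpmonic.coeff_natDegree
    rwa [hpdeg] at this
  -- matrices
  set Omat : Matrix (Fin r) (Fin r) ℝ :=
    Matrix.of (fun i j : Fin r => (Ψ * Φ ^ (i : ℕ)) 0 j) with hOmat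
  set Cmat : Matrix (Fin r) (Fin r) ℝ :=
    Matrix.of (fun i j : Fin r => (M ^ (j : ℕ) * N) i 0) with hCmat
  set Hmat : Matrix (Fin r) (Fin r) ℝ :=
    Matrix.of (fun u v : Fin r => a ((u : ℕ) + (v : ℕ) + 1)) with hHmat
  -- step D : Cmat * Hmat * Omat equals the double sum
  have entry : ∀ (u v : ℕ) (i j : Fin r), (M ^ u * (N * Ψ) * Φ ^ v) i j
      = (M ^ u * N) i 0 * (Ψ * Φ ^ v) 0 j := by
    intro u v i j
    have e : M ^ u * (N * Ψ) * Φ ^ v = (M ^ u * N) * (Ψ * Φ ^ v) := by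
      rw [← Matrix.mul_assoc, Matrix.mul_assoc]
    rw [e, Matrix.mul_apply]
    simp [Fin.sum_univ_one]
  have stepD : Cmat * Hmat * Omat
      = ∑ u ∈ Finset.range r, ∑ v ∈ Finset.range r,
          a (u + v + 1) • (M ^ u * (N * Ψ) * Φ ^ v) := by
    have h1 : ∑ u ∈ Finset.range r, ∑ v ∈ Finset.range r,
          a (u + v + 1) • (M ^ u * (N * Ψ) * Φ ^ v)
        = ∑ u : Fin r, ∑ v : Fin r,
          a ((u : ℕ) + (v : ℕ) + 1) • (M ^ (u : ℕ) * (N * Ψ) * Φ ^ (v : ℕ)) := by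
      rw [← Fin.sum_univ_eq_sum_range]
      refine Finset.sum_congr rfl fun u _ => ?_
      rw [← Fin.sum_univ_eq_sum_range]
    rw [h1]
    ext i j
    have L : (Cmat * Hmat * Omat) i j
        = ∑ v : Fin r, ∑ u : Fin r, Cmat i u * Hmat u v * Omat v j := by
      rw [Matrix.mul_apply]
      refine Finset.sum_congr rfl fun v _ => ?_
      rw [Matrix.mul_apply, Finset.sum_mul]
    rw [L]
    simp only [Matrix.sum_apply]
    have R : ∀ u v : Fin r, (a ((u:ℕ) + (v:ℕ) + 1) • (M ^ (u:ℕ) * (N * Ψ) * Φ ^ (v:ℕ))) i j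
        = Cmat i u * Hmat u v * Omat v j := by
      intro u v
      rw [Matrix.smul_apply, entry, smul_eq_mul, hCmat, hHmat, hOmat]
      simp only [Matrix.of_apply]
      ring
    simp only [R]
    exact Finset.sum_comm
  -- step B : the Sylvester identity summed against charpoly coefficients
  have hCH : Polynomial.aeval Φ p = 0 := Matrix.aeval_self_charpoly Φ
  have haevM : Polynomial.aeval M p = ∑ k ∈ Finset.range (r + 1), a k • M ^ k := by
    rw [Polynomial.aeval_eq_sum_range (p := p) M, hpdeg]
  have haevΦ : Polynomial.aeval Φ p = ∑ k ∈ Finset.range (r + 1), a k • Φ ^ k := by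
    rw [Polynomial.aeval_eq_sum_range (p := p) Φ, hpdeg]
  have key : ∀ k : ℕ, T * Φ ^ k - M ^ k * T
      = ∑ j ∈ Finset.range k, M ^ j * (N * Ψ) * Φ ^ (k - 1 - j) :=
    key_pow Φ M T (N * Ψ) hT
  have main : Polynomial.aeval M p * T = -(Cmat * Hmat * Omat) := by
    have e1 : T * Polynomial.aeval Φ p - Polynomial.aeval M p * T
        = ∑ k ∈ Finset.range (r + 1), a k • (T * Φ ^ k - M ^ k * T) := by
      rw [haevM, haevΦ, Finset.mul_sum, Finset.sum_mul, ← Finset.sum_sub_distrib]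
      refine Finset.sum_congr rfl fun k _ => ?_
      rw [mul_smul_comm, smul_mul_assoc, smul_sub]
    have e2 : ∑ k ∈ Finset.range (r + 1), a k • (T * Φ ^ k - M ^ k * T)
        = ∑ u ∈ Finset.range r, ∑ v ∈ Finset.range r,
            a (u + v + 1) • (M ^ u * (N * Ψ) * Φ ^ v) := by
      simp only [key]
      exact sum_reindex r a (fun u v => M ^ u * (N * Ψ) * Φ ^ v) ha0
    have e3 : T * Polynomial.aeval Φ p - Polynomial.aeval M p * T
        = Cmat * Hmat * Omat := by rw [e1, e2, ← stepD]
    rw [hCH, mul_zero, zero_sub] at e3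
    rw [← e3, neg_neg]
  -- invertibility of the factors
  have hC : IsUnit Cmat := isUnit_of_rank_eq_card _ hctrb
  have hO : IsUnit Omat := isUnit_of_rank_eq_card _ hobs
  have hH : IsUnit Hmat := by
    rw [Matrix.isUnit_iff_isUnit_det, isUnit_iff_ne_zero]
    have hut : (Hmat.submatrix id Fin.rev).det = 1 := by
      have htri : (Hmat.submatrix id (Fin.rev : Fin r → Fin r)).BlockTriangular id := by
        intro u v huv
        simp only [id_eq] at huv
        simp only [Matrix.submatrix_apply, id_eq, hHmat, Matrix.of_apply]
        apply ha0
        have h1 : (v.rev : ℕ) = r - ((v : ℕ) + 1) := Fin.val_rev v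
        have hu := u.isLt
        have hv := v.isLt
        have : (v : ℕ) < (u : ℕ) := huv
        omega
      rw [Matrix.det_of_upperTriangular htri]
      apply Finset.prod_eq_one
      intro u _
      simp only [Matrix.submatrix_apply, id_eq, hHmat, Matrix.of_apply]
      have h1 : (u.rev : ℕ) = r - ((u : ℕ) + 1) := Fin.val_rev u
      have hu := u.isLt
      have : (u : ℕ) + ((u.rev : ℕ)) + 1 = r := by omega
      rw [this, har]
    have := Matrix.det_permute' (Fin.revPerm : Equiv.Perm (Fin r)) Hmat
    have hco : (Hmat.submatrix id (Fin.revPerm : Equiv.Perm (Fin r))).det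
        = (Hmat.submatrix id Fin.rev).det := rfl
    rw [hco, hut] at this
    intro hdet0
    rw [hdet0, mul_zero] at this
    exact one_ne_zero this
  -- invertibility of aeval M p via disjoint spectra
  have hPM : IsUnit (Polynomial.aeval M p) := by
    rw [Matrix.isUnit_iff_isUnit_det, isUnit_iff_ne_zero]
    intro hdet0
    set f : ℝ →+* ℂ := algebraMap ℝ ℂ with hf
    have hmap : (Polynomial.aeval M p).map f
        = Polynomial.aeval (M.map f) ((Φ.map f).charpoly) := by
      have h1 : (Polynomial.aeval M p).map f
          = (AlgHom.mapMatrix (Algebra.ofId ℝ ℂ)) (Polynomial.aeval M p) := rfl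
      rw [h1, ← Polynomial.aeval_algHom_apply]
      have h2 : (AlgHom.mapMatrix (Algebra.ofId ℝ ℂ)) M = M.map f := rfl
      rw [h2, ← Polynomial.aeval_map_algebraMap ℂ (M.map f) p, ← Matrix.charpoly_map]
    have hdetC : ((Polynomial.aeval (M.map f) ((Φ.map f).charpoly)) :
        Matrix (Fin r) (Fin r) ℂ).det = 0 := by
      rw [← hmap]
      have : (Polynomial.aeval M p).map f = f.mapMatrix (Polynomial.aeval M p) := rfl
      rw [this, ← RingHom.map_det, hdet0, map_zero]
    have hnotunit : ¬ IsUnit (Polynomial.aeval (M.map f) ((Φ.map f).charpoly)) := by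
      rw [Matrix.isUnit_iff_isUnit_det, isUnit_iff_ne_zero, not_not]
      exact hdetC
    have hzero : (0 : ℂ) ∈ spectrum ℂ (Polynomial.aeval (M.map f) ((Φ.map f).charpoly)) :=
      (spectrum.zero_mem_iff (R := ℂ)).mpr hnotunit
    have hdegpos : 0 < ((Φ.map f).charpoly).degree := by
      have hnd : ((Φ.map f).charpoly).natDegree = r := by
        rw [Matrix.charpoly_natDegree_eq_dim, Fintype.card_fin]
      rw [Polynomial.degree_eq_natDegree (Matrix.charpoly_monic _).ne_zero, hnd]
      exact_mod_cast hr
    rw [spectrum.map_polynomial_aeval_of_degree_pos (M.map f) ((Φ.map f).charpoly) hdegpos]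
      at hzero
    obtain ⟨μ, hμmem, hμeval⟩ := hzero
    have hroot1 : ((Φ.map f).charpoly).IsRoot μ := hμeval
    have hroot2 : ((M.map f).charpoly).IsRoot μ := isRoot_charpoly_of_mem_spectrum _ μ hμmem
    have hfeq : (M.map f) = M.map (Complex.ofReal ·) := rfl
    have hfeq2 : (Φ.map f) = Φ.map (Complex.ofReal ·) := rfl
    exact hspec μ ⟨hfeq2 ▸ hroot1, hfeq ▸ hroot2⟩
  -- conclude
  rw [Matrix.isUnit_iff_isUnit_det, isUnit_iff_ne_zero]
  intro hdetT
  have := congrArg Matrix.det main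
  rw [Matrix.det_mul, hdetT, mul_zero, Matrix.det_neg, Matrix.det_mul, Matrix.det_mul] at this
  have h1 : Cmat.det ≠ 0 := isUnit_iff_ne_zero.mp ((Matrix.isUnit_iff_isUnit_det _).mp hC)
  have h2 : Hmat.det ≠ 0 := isUnit_iff_ne_zero.mp ((Matrix.isUnit_iff_isUnit_det _).mp hH)
  have h3 : Omat.det ≠ 0 := isUnit_iff_ne_zero.mp ((Matrix.isUnit_iff_isUnit_det _).mp hO)
  have h4 : ((-1 : ℝ) ^ Fintype.card (Fin r)) ≠ 0 := by
    simp
  exact (mul_ne_zero h4 (mul_ne_zero (mul_ne_zero h1 h2) h3)) this.symm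
end

section
/- Let M : [0,∞) → ℝⁿˣⁿ be differentiable with M(t) symmetric positive definite and k_m I ≤ M(t) ≤ k_M I, let C : [0,∞) → ℝⁿˣⁿ be such that Ṁ(t) − 2C(t) is skew-symmetric for all t. Suppose s : [0,∞) → ℝⁿ satisfies M(t)ṡ = −C(t)s − Ks + B ξ̂(t) − ρ(t) ω̃(t), ω̃̇ = Λ⁻¹ ρ(t)ᵀ s, and ξ̂̇ = M₀ ξ̂ with M₀ Hurwitz, where K ≻ 0, Λ ≻ 0 diagonal, and ρ bounded. Then with V = ε ξ̂ᵀQ ξ̂ + ½(sᵀ M(t) s + ω̃ᵀ Λ ω̃), where Q ≻ 0 solves Q M₀ + M₀ᵀ Q = −I and ε ≥ ‖B‖²/λ_min(K), the derivative satisfies V̇ ≤ −(ε/2)‖ξ̂‖² − ½ sᵀ K s ≤ 0; hence s, ξ̂, ω̃ are bounded. -/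
open Matrix

attribute [local instance] Matrix.frobeniusNormedAddCommGroup Matrix.frobeniusNormedSpace

lemma dot_symm' {k : ℕ} (A : Matrix (Fin k) (Fin k) ℝ) (hA : A.IsSymm)
    (x y : Fin k → ℝ) : x ⬝ᵥ (A *ᵥ y) = y ⬝ᵥ (A *ᵥ x) := by
  rw [dotProduct_mulVec, ← mulVec_transpose, hA, dotProduct_comm]

lemma dot_skew' {k : ℕ} (A : Matrix (Fin k) (Fin k) ℝ) (hA : Aᵀ = -A)
    (x : Fin k → ℝ) : x ⬝ᵥ (A *ᵥ x) = 0 := by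
  have h : x ⬝ᵥ (A *ᵥ x) = -(x ⬝ᵥ (A *ᵥ x)) := by
    conv_lhs => rw [dotProduct_mulVec, ← mulVec_transpose, hA, neg_mulVec,
      dotProduct_comm, dotProduct_neg]
  linarith

lemma lyap_dot {k : ℕ} (Q M₀ : Matrix (Fin k) (Fin k) ℝ)
    (hQlyap : Q * M₀ + M₀ᵀ * Q = -1) (x : Fin k → ℝ) :
    (M₀ *ᵥ x) ⬝ᵥ (Q *ᵥ x) + x ⬝ᵥ (Q *ᵥ (M₀ *ᵥ x)) = -(x ⬝ᵥ x) := by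
  have h1 : (M₀ *ᵥ x) ⬝ᵥ (Q *ᵥ x) = x ⬝ᵥ ((M₀ᵀ * Q) *ᵥ x) := by
    rw [dotProduct_comm, dotProduct_mulVec, ← mulVec_transpose, ← mulVec_mulVec,
      dotProduct_comm]
  have h2 : x ⬝ᵥ (Q *ᵥ (M₀ *ᵥ x)) = x ⬝ᵥ ((Q * M₀) *ᵥ x) := by rw [mulVec_mulVec]
  rw [h1, h2, ← dotProduct_add, ← add_mulVec]
  rw [add_comm (M₀ᵀ * Q), hQlyap, neg_mulVec, one_mulVec, dotProduct_neg]

lemma hasDerivAt_dot_mulVec {k l : ℕ} (A : Matrix (Fin k) (Fin l) ℝ)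
    {u : ℝ → Fin k → ℝ} {v : ℝ → Fin l → ℝ} {u' : Fin k → ℝ} {v' : Fin l → ℝ} {t : ℝ}
    (hu : HasDerivAt u u' t) (hv : HasDerivAt v v' t) :
    HasDerivAt (fun τ => u τ ⬝ᵥ (A *ᵥ v τ))
      (u' ⬝ᵥ (A *ᵥ v t) + u t ⬝ᵥ (A *ᵥ v')) t := by
  have hu' := hasDerivAt_pi.mp hu
  have hv' := hasDerivAt_pi.mp hv
  have H : HasDerivAt (fun τ => ∑ i, u τ i * ∑ j, A i j * v τ j)
      (∑ i, (u' i * ∑ j, A i j * v t j + u t i * ∑ j, A i j * v' j)) t := by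
    apply HasDerivAt.fun_sum
    intro i _
    exact (hu' i).mul (HasDerivAt.fun_sum fun j _ => (hv' j).const_mul (A i j))
  convert H using 1 <;> simp [dotProduct, mulVec, Finset.sum_add_distrib]

lemma hasDerivAt_dot_mulVec_t {k : ℕ}
    {Mf M' : ℝ → Matrix (Fin k) (Fin k) ℝ} {u : ℝ → Fin k → ℝ} {u' : Fin k → ℝ} {t : ℝ}
    (hM : HasDerivAt Mf (M' t) t) (hu : HasDerivAt u u' t) :
    HasDerivAt (fun τ => u τ ⬝ᵥ (Mf τ *ᵥ u τ))
      (u' ⬝ᵥ (Mf t *ᵥ u t) + u t ⬝ᵥ (M' t *ᵥ u t) + u t ⬝ᵥ (Mf t *ᵥ u')) t := by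
  have hu' := hasDerivAt_pi.mp hu
  have entry : ∀ i j, HasDerivAt (fun τ => Mf τ i j) (M' t i j) t := by
    intro i j
    let L : Matrix (Fin k) (Fin k) ℝ →ₗ[ℝ] ℝ :=
      { toFun := fun A => A i j, map_add' := fun _ _ => rfl, map_smul' := fun _ _ => rfl }
    have := L.toContinuousLinearMap.hasFDerivAt.comp_hasDerivAt t hM
    exact this
  have H : HasDerivAt (fun τ => ∑ i, u τ i * ∑ j, Mf τ i j * u τ j)
      (∑ i, (u' i * ∑ j, Mf t i j * u t j
        + u t i * ∑ j, (M' t i j * u t j + Mf t i j * u' j))) t := by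
    apply HasDerivAt.fun_sum
    intro i _
    exact (hu' i).mul (HasDerivAt.fun_sum fun j _ => ((entry i j).mul (hu' j)))
  convert H using 1 <;> simp [dotProduct, mulVec, Finset.sum_add_distrib, mul_add, add_assoc]

lemma dot_self_nonneg' {k : ℕ} (v : Fin k → ℝ) : 0 ≤ v ⬝ᵥ v :=
  Finset.sum_nonneg fun i _ => mul_self_nonneg _

lemma dot_self_pos {k : ℕ} {v : Fin k → ℝ} (hv : v ≠ 0) : 0 < v ⬝ᵥ v :=
  lt_of_le_of_ne (dot_self_nonneg' v) fun h => hv (dotProduct_self_eq_zero.mp h.symm)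

lemma norm_le_sqrt_dot {k : ℕ} (v : Fin k → ℝ) {a : ℝ} (h : v ⬝ᵥ v ≤ a) :
    ‖v‖ ≤ Real.sqrt a := by
  rw [pi_norm_le_iff_of_nonneg (Real.sqrt_nonneg a)]
  intro i
  rw [Real.norm_eq_abs]
  apply Real.abs_le_sqrt
  calc v i ^ 2 = v i * v i := sq (v i) ▸ by ring
    _ ≤ v ⬝ᵥ v := Finset.single_le_sum (f := fun j => v j * v j)
        (fun j _ => mul_self_nonneg _) (Finset.mem_univ i)
    _ ≤ a := h

lemma dot_continuous {k l : ℕ} (A : Matrix (Fin k) (Fin l) ℝ) :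
    Continuous fun p : (Fin k → ℝ) × (Fin l → ℝ) => p.1 ⬝ᵥ (A *ᵥ p.2) := by
  simp only [dotProduct, mulVec]
  fun_prop

lemma quad_lower {k : ℕ} (A : Matrix (Fin k) (Fin k) ℝ)
    (h : ∀ v : Fin k → ℝ, v ≠ 0 → 0 < v ⬝ᵥ (A *ᵥ v)) :
    ∃ c > 0, ∀ v : Fin k → ℝ, c * (v ⬝ᵥ v) ≤ v ⬝ᵥ (A *ᵥ v) := by
  by_cases hk : ∀ v : Fin k → ℝ, v = 0
  · exact ⟨1, one_pos, fun v => by simp [hk v]⟩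
  push_neg at hk
  obtain ⟨v₀, hv₀⟩ := hk
  have hf : Continuous fun v : Fin k → ℝ => v ⬝ᵥ (A *ᵥ v) :=
    (dot_continuous A).comp (continuous_id.prodMk continuous_id)
  have hdot : Continuous fun v : Fin k → ℝ => v ⬝ᵥ v := by
    simpa [Function.comp_def] using (dot_continuous (1 : Matrix (Fin k) (Fin k) ℝ)).comp
      (continuous_id.prodMk continuous_id)
  set S : Set (Fin k → ℝ) := {v | v ⬝ᵥ v = 1} with hSdef
  have hSc : IsCompact S := by
    apply Metric.isCompact_of_isClosed_isBounded
    · exact isClosed_eq hdot continuous_const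
    · apply (Metric.isBounded_closedBall (x := (0 : Fin k → ℝ)) (r := 1)).subset
      intro v hv
      rw [Metric.mem_closedBall, dist_zero_right]
      simpa using norm_le_sqrt_dot v (le_of_eq hv)
  -- normalization map
  have hnorm : ∀ v : Fin k → ℝ, v ≠ 0 → ((Real.sqrt (v ⬝ᵥ v))⁻¹ • v) ∈ S := by
    intro v hv
    have hp := dot_self_pos hv
    have hs : Real.sqrt (v ⬝ᵥ v) ≠ 0 := by positivity
    show ((Real.sqrt (v ⬝ᵥ v))⁻¹ • v) ⬝ᵥ ((Real.sqrt (v ⬝ᵥ v))⁻¹ • v) = 1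
    rw [smul_dotProduct, dotProduct_smul, smul_eq_mul, smul_eq_mul]
    rw [← mul_assoc, ← Real.sqrt_mul_self hp.le]
    field_simp
    rw [Real.sq_sqrt (Real.sqrt_nonneg _)]
  obtain ⟨w, hwS, hwmin⟩ := hSc.exists_isMinOn ⟨_, hnorm v₀ hv₀⟩ hf.continuousOn
  have hwne : w ≠ 0 := by
    intro h0; rw [hSdef] at hwS; simp [h0] at hwS
  refine ⟨w ⬝ᵥ (A *ᵥ w), h w hwne, fun v => ?_⟩
  by_cases hv : v = 0
  · simp [hv]
  · have hp := dot_self_pos hv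
    have hle := hwmin (hnorm v hv)
    have hAsm : ((Real.sqrt (v ⬝ᵥ v))⁻¹ • v) ⬝ᵥ (A *ᵥ ((Real.sqrt (v ⬝ᵥ v))⁻¹ • v))
        = (Real.sqrt (v ⬝ᵥ v))⁻¹ * ((Real.sqrt (v ⬝ᵥ v))⁻¹ * (v ⬝ᵥ (A *ᵥ v))) := by
      rw [mulVec_smul, smul_dotProduct, dotProduct_smul, smul_eq_mul, smul_eq_mul]
    simp only [Set.mem_setOf_eq] at hle
    rw [hAsm] at hle
    have hs : 0 < Real.sqrt (v ⬝ᵥ v) := Real.sqrt_pos.mpr hp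
    have h2 : Real.sqrt (v ⬝ᵥ v) * Real.sqrt (v ⬝ᵥ v) = v ⬝ᵥ v := Real.mul_self_sqrt hp.le
    have h4 : Real.sqrt (v ⬝ᵥ v) * Real.sqrt (v ⬝ᵥ v)
        * ((Real.sqrt (v ⬝ᵥ v))⁻¹ * ((Real.sqrt (v ⬝ᵥ v))⁻¹ * (v ⬝ᵥ (A *ᵥ v))))
        = v ⬝ᵥ (A *ᵥ v) := by
      field_simp
    calc w ⬝ᵥ (A *ᵥ w) * (v ⬝ᵥ v)
        = Real.sqrt (v ⬝ᵥ v) * Real.sqrt (v ⬝ᵥ v) * (w ⬝ᵥ (A *ᵥ w)) := by rw [h2]; ring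
      _ ≤ Real.sqrt (v ⬝ᵥ v) * Real.sqrt (v ⬝ᵥ v)
          * ((Real.sqrt (v ⬝ᵥ v))⁻¹ * ((Real.sqrt (v ⬝ᵥ v))⁻¹ * (v ⬝ᵥ (A *ᵥ v)))) :=
          mul_le_mul_of_nonneg_left hle (by positivity)
      _ = v ⬝ᵥ (A *ᵥ v) := h4
/-- Lyapunov analysis of the closed-loop adaptive system:
with V = ε ξ̂ᵀQξ̂ + ½(sᵀM(t)s + ω̃ᵀΛω̃), Q solving QM₀+M₀ᵀQ=−I and
ε ≥ ‖B‖²/λ_min(K), one gets V̇ ≤ −(ε/2)‖ξ̂‖² − ½sᵀKs ≤ 0, hence s, ξ̂, ω̃ bounded. -/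
theorem stmt16 {n m p q : ℕ}
    (Mf M' Cf : ℝ → Matrix (Fin n) (Fin n) ℝ)
    (hMderiv : ∀ t : ℝ, HasDerivAt Mf (M' t) t)
    (hMsymm : ∀ t ≥ (0:ℝ), (Mf t).IsSymm)
    (km kM : ℝ) (hkm : 0 < km)
    (hMbd : ∀ t ≥ (0:ℝ), ∀ v : Fin n → ℝ,
      km * (v ⬝ᵥ v) ≤ v ⬝ᵥ (Mf t *ᵥ v) ∧ v ⬝ᵥ (Mf t *ᵥ v) ≤ kM * (v ⬝ᵥ v))
    (hskew : ∀ t ≥ (0:ℝ), (M' t - 2 • Cf t)ᵀ = -(M' t - 2 • Cf t))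
    (K : Matrix (Fin n) (Fin n) ℝ) (hKsymm : K.IsSymm)
    (lamK : ℝ) (hlamK : 0 < lamK)
    (hKpd : ∀ v : Fin n → ℝ, lamK * (v ⬝ᵥ v) ≤ v ⬝ᵥ (K *ᵥ v))
    (Λd : Fin q → ℝ) (hΛd : ∀ i, 0 < Λd i)
    (M₀ : Matrix (Fin m) (Fin m) ℝ)
    (hHurwitz : ∀ μ : ℂ, (Matrix.charpoly (M₀.map (Complex.ofReal ·))).IsRoot μ → μ.re < 0)
    (Q : Matrix (Fin m) (Fin m) ℝ) (hQsymm : Q.IsSymm)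
    (hQpd : ∀ v : Fin m → ℝ, v ≠ 0 → 0 < v ⬝ᵥ (Q *ᵥ v))
    (hQlyap : Q * M₀ + M₀ᵀ * Q = -1)
    (B : Matrix (Fin n) (Fin m) ℝ) (bB : ℝ) (hbB : 0 ≤ bB)
    (hBop : ∀ ξ : Fin m → ℝ, (B *ᵥ ξ) ⬝ᵥ (B *ᵥ ξ) ≤ bB ^ 2 * (ξ ⬝ᵥ ξ))
    (ε : ℝ) (hε : bB ^ 2 / lamK ≤ ε)
    (ρ : ℝ → Matrix (Fin n) (Fin q) ℝ)
    (hρbd : ∃ Bρ : ℝ, ∀ t ≥ (0:ℝ), ‖ρ t‖ ≤ Bρ)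
    (s s' : ℝ → Fin n → ℝ) (ξ : ℝ → Fin m → ℝ) (ω : ℝ → Fin q → ℝ)
    (hs : ∀ t ≥ (0:ℝ), HasDerivAt s (s' t) t)
    (hsdyn : ∀ t ≥ (0:ℝ),
      Mf t *ᵥ s' t = -(Cf t *ᵥ s t) - K *ᵥ s t + B *ᵥ ξ t - ρ t *ᵥ ω t)
    (hξ : ∀ t ≥ (0:ℝ), HasDerivAt ξ (M₀ *ᵥ ξ t) t)
    (hω : ∀ t ≥ (0:ℝ), HasDerivAt ω ((Matrix.diagonal Λd)⁻¹ *ᵥ ((ρ t)ᵀ *ᵥ s t)) t)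
    (V : ℝ → ℝ)
    (hV : ∀ t : ℝ, V t = ε * (ξ t ⬝ᵥ (Q *ᵥ ξ t))
      + (1/2) * (s t ⬝ᵥ (Mf t *ᵥ s t) + ω t ⬝ᵥ (Matrix.diagonal Λd *ᵥ ω t))) :
    (∃ V' : ℝ → ℝ, ∀ t ≥ (0:ℝ), HasDerivAt V (V' t) t ∧
      V' t ≤ -(ε/2) * (ξ t ⬝ᵥ ξ t) - (1/2) * (s t ⬝ᵥ (K *ᵥ s t)) ∧ V' t ≤ 0) ∧
    (∃ Bd : ℝ, ∀ t ≥ (0:ℝ), ‖s t‖ ≤ Bd ∧ ‖ξ t‖ ≤ Bd ∧ ‖ω t‖ ≤ Bd) := by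

  have hε0 : (0:ℝ) ≤ ε := le_trans (by positivity) hε
  set Λ : Matrix (Fin q) (Fin q) ℝ := Matrix.diagonal Λd with hΛdef
  have hΛsymm : Λ.IsSymm := Matrix.isSymm_diagonal Λd
  have hΛinv : Λ * Λ⁻¹ = 1 := by
    apply Matrix.mul_nonsing_inv
    rw [hΛdef, Matrix.det_diagonal]
    exact isUnit_iff_ne_zero.mpr (Finset.prod_pos (fun i _ => hΛd i)).ne'
  have hΛpd : ∀ v : Fin q → ℝ, v ≠ 0 → 0 < v ⬝ᵥ (Λ *ᵥ v) := by
    intro v hv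
    obtain ⟨i, hi⟩ := Function.ne_iff.mp hv
    have hdd : v ⬝ᵥ (Λ *ᵥ v) = ∑ j, Λd j * (v j * v j) := by
      simp only [dotProduct, hΛdef, mulVec_diagonal]
      exact Finset.sum_congr rfl fun j _ => by ring
    rw [hdd]
    refine Finset.sum_pos' (fun j _ => by nlinarith [mul_self_nonneg (v j), (hΛd j).le])
      ⟨i, Finset.mem_univ i, ?_⟩
    have hvi : v i ≠ 0 := hi
    nlinarith [hΛd i, mul_self_pos.mpr hvi]
  obtain ⟨cΛ, hcΛ, hΛlow⟩ := quad_lower Λ hΛpd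
  obtain ⟨cQ, hcQ, hQlow⟩ := quad_lower Q hQpd
  set W : ℝ → ℝ := fun t => -ε * (ξ t ⬝ᵥ ξ t) - (s t ⬝ᵥ (K *ᵥ s t))
      + s t ⬝ᵥ (B *ᵥ ξ t) with hWdef
  have hVfun : V = fun t => ε * (ξ t ⬝ᵥ (Q *ᵥ ξ t))
      + (1/2) * (s t ⬝ᵥ (Mf t *ᵥ s t) + ω t ⬝ᵥ (Λ *ᵥ ω t)) := funext hV
  -- derivative of V
  have hVder : ∀ t ≥ (0:ℝ), HasDerivAt V (W t) t := by
    intro t ht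
    have h1 := (hasDerivAt_dot_mulVec Q (hξ t ht) (hξ t ht)).const_mul ε
    have h2 := hasDerivAt_dot_mulVec_t (hMderiv t) (hs t ht)
    have h3 := hasDerivAt_dot_mulVec Λ (hω t ht) (hω t ht)
    have H := h1.add ((h2.add h3).const_mul (1/2:ℝ))
    rw [hVfun]
    convert H using 1
    · rfl
    · rfl
    · rfl
    have hA := lyap_dot Q M₀ hQlyap (ξ t)
    have hB2 : s' t ⬝ᵥ (Mf t *ᵥ s t) = s t ⬝ᵥ (Mf t *ᵥ s' t) :=
      dot_symm' (Mf t) (hMsymm t ht) _ _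
    have hB3 : s t ⬝ᵥ (Mf t *ᵥ s' t) = -(s t ⬝ᵥ (Cf t *ᵥ s t)) - s t ⬝ᵥ (K *ᵥ s t)
        + s t ⬝ᵥ (B *ᵥ ξ t) - s t ⬝ᵥ (ρ t *ᵥ ω t) := by
      rw [hsdyn t ht]
      simp [dotProduct_add, dotProduct_sub, dotProduct_neg]
    have h0 := dot_skew' _ (hskew t ht) (s t)
    rw [sub_mulVec, dotProduct_sub, smul_mulVec, dotProduct_smul] at h0
    have h0' : s t ⬝ᵥ (M' t *ᵥ s t) - 2 * (s t ⬝ᵥ (Cf t *ᵥ s t)) = 0 := by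
      rw [nsmul_eq_mul] at h0; push_cast at h0; linarith
    have hC1 : Λ *ᵥ (Λ⁻¹ *ᵥ ((ρ t)ᵀ *ᵥ s t)) = (ρ t)ᵀ *ᵥ s t := by
      rw [mulVec_mulVec, hΛinv, one_mulVec]
    have hC2 : s t ⬝ᵥ (ρ t *ᵥ ω t) = ω t ⬝ᵥ ((ρ t)ᵀ *ᵥ s t) := by
      rw [dotProduct_mulVec, ← mulVec_transpose, dotProduct_comm]
    have hC4 : ω t ⬝ᵥ (Λ *ᵥ (Λ⁻¹ *ᵥ ((ρ t)ᵀ *ᵥ s t)))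
        = s t ⬝ᵥ (ρ t *ᵥ ω t) := by rw [hC1]; exact hC2.symm
    have hC3 : (Λ⁻¹ *ᵥ ((ρ t)ᵀ *ᵥ s t)) ⬝ᵥ (Λ *ᵥ ω t)
        = ω t ⬝ᵥ (Λ *ᵥ (Λ⁻¹ *ᵥ ((ρ t)ᵀ *ᵥ s t))) :=
      dot_symm' Λ hΛsymm _ _
    rw [hWdef]
    linear_combination (-ε) * hA - (1/2) * hB2 - hB3 - (1/2) * h0' - (1/2) * hC3 - hC4
  -- the inequality on W
  have hWle : ∀ t ≥ (0:ℝ), W t ≤ -(ε/2) * (ξ t ⬝ᵥ ξ t) - (1/2) * (s t ⬝ᵥ (K *ᵥ s t)) := by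
    intro t ht
    set w : Fin n → ℝ := B *ᵥ ξ t with hwd
    have hexp := dot_self_nonneg' (lamK • s t - w)
    have hrw : (lamK • s t - w) ⬝ᵥ (lamK • s t - w)
        = lamK^2 * (s t ⬝ᵥ s t) - 2 * lamK * (s t ⬝ᵥ w) + w ⬝ᵥ w := by
      simp only [dotProduct_sub, sub_dotProduct, smul_dotProduct, dotProduct_smul,
        smul_eq_mul]
      linear_combination (-lamK : ℝ) * dotProduct_comm w (s t)
    rw [hrw] at hexp
    have hB' := hBop (ξ t)
    have hK' := hKpd (s t)
    have hε' : bB ^ 2 ≤ ε * lamK := (div_le_iff₀ hlamK).mp hε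
    have hX : 0 ≤ ξ t ⬝ᵥ ξ t := dot_self_nonneg' _
    rw [hWdef]
    nlinarith [hexp, hB', hK', mul_le_mul_of_nonneg_right hε' hX, hlamK,
      dot_self_nonneg' (s t)]
  have hWle0 : ∀ t ≥ (0:ℝ), W t ≤ 0 := by
    intro t ht
    have h1 := hWle t ht
    have hX : 0 ≤ ξ t ⬝ᵥ ξ t := dot_self_nonneg' _
    have hK' := hKpd (s t)
    have hs2 : 0 ≤ s t ⬝ᵥ s t := dot_self_nonneg' _
    have e1 : 0 ≤ ε * (ξ t ⬝ᵥ ξ t) := mul_nonneg hε0 hX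
    have e2 : 0 ≤ lamK * (s t ⬝ᵥ s t) := mul_nonneg hlamK.le hs2
    have h2 : -(ε/2) * (ξ t ⬝ᵥ ξ t) - (1/2) * (s t ⬝ᵥ (K *ᵥ s t)) ≤ 0 := by
      nlinarith [e1, e2, hK']
    exact h1.trans h2
  constructor
  · exact ⟨W, fun t ht => ⟨hVder t ht, hWle t ht, hWle0 t ht⟩⟩
  -- boundedness
  have hVanti : AntitoneOn V (Set.Ici (0:ℝ)) := by
    apply antitoneOn_of_deriv_nonpos (convex_Ici 0)
    · exact fun t ht => (hVder t ht).continuousAt.continuousWithinAt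
    · intro t ht
      rw [interior_Ici] at ht
      exact (hVder t ht.le).differentiableAt.differentiableWithinAt
    · intro t ht
      rw [interior_Ici] at ht
      rw [(hVder t ht.le).deriv]
      exact hWle0 t ht.le
  set g : ℝ → ℝ := fun t => ξ t ⬝ᵥ (Q *ᵥ ξ t) with hgdef
  have hgder : ∀ t ≥ (0:ℝ), HasDerivAt g (-(ξ t ⬝ᵥ ξ t)) t := by
    intro t ht
    have H := hasDerivAt_dot_mulVec Q (hξ t ht) (hξ t ht)
    rw [lyap_dot Q M₀ hQlyap (ξ t)] at H
    exact H
  have hganti : AntitoneOn g (Set.Ici (0:ℝ)) := by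
    apply antitoneOn_of_deriv_nonpos (convex_Ici 0)
    · exact fun t ht => (hgder t ht).continuousAt.continuousWithinAt
    · intro t ht
      rw [interior_Ici] at ht
      exact (hgder t ht.le).differentiableAt.differentiableWithinAt
    · intro t ht
      rw [interior_Ici] at ht
      rw [(hgder t ht.le).deriv]
      simpa using dot_self_nonneg' (ξ t)
  have hVlow : ∀ t ≥ (0:ℝ),
      (1/2) * (km * (s t ⬝ᵥ s t)) ≤ V t ∧ (1/2) * (cΛ * (ω t ⬝ᵥ ω t)) ≤ V t := by
    intro t ht
    have h1 : 0 ≤ ε * (ξ t ⬝ᵥ (Q *ᵥ ξ t)) := by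
      apply mul_nonneg hε0
      have := hQlow (ξ t)
      nlinarith [dot_self_nonneg' (ξ t)]
    have h2 := (hMbd t ht (s t)).1
    have h3 := hΛlow (ω t)
    have h4 : 0 ≤ cΛ * (ω t ⬝ᵥ ω t) := mul_nonneg hcΛ.le (dot_self_nonneg' _)
    have h5 : 0 ≤ km * (s t ⬝ᵥ s t) :=
      mul_nonneg hkm.le (dot_self_nonneg' _)
    rw [hV t]
    constructor <;> nlinarith
  have hV0 : 0 ≤ V 0 := by
    have := (hVlow 0 le_rfl).1
    nlinarith [mul_nonneg hkm.le (dot_self_nonneg' (s 0))]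
  refine ⟨Real.sqrt (2 * V 0 / km) + Real.sqrt (2 * V 0 / cΛ) + Real.sqrt (g 0 / cQ),
    fun t ht => ?_⟩
  have hmem0 : (0:ℝ) ∈ Set.Ici (0:ℝ) := Set.mem_Ici.mpr le_rfl
  have hmemt : t ∈ Set.Ici (0:ℝ) := Set.mem_Ici.mpr ht
  have hVt : V t ≤ V 0 := hVanti hmem0 hmemt ht
  have hgt : g t ≤ g 0 := hganti hmem0 hmemt ht
  have snn := Real.sqrt_nonneg
  have hsb : ‖s t‖ ≤ Real.sqrt (2 * V 0 / km) := by
    apply norm_le_sqrt_dot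
    rw [le_div_iff₀ hkm]
    have := (hVlow t ht).1
    linarith
  have hωb : ‖ω t‖ ≤ Real.sqrt (2 * V 0 / cΛ) := by
    apply norm_le_sqrt_dot
    rw [le_div_iff₀ hcΛ]
    have := (hVlow t ht).2
    linarith
  have hξb : ‖ξ t‖ ≤ Real.sqrt (g 0 / cQ) := by
    apply norm_le_sqrt_dot
    rw [le_div_iff₀ hcQ]
    have := hQlow (ξ t)
    linarith
  refine ⟨?_, ?_, ?_⟩
  · linarith [Real.sqrt_nonneg (2 * V 0 / cΛ), Real.sqrt_nonneg (g 0 / cQ)]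
  · linarith [Real.sqrt_nonneg (2 * V 0 / km), Real.sqrt_nonneg (2 * V 0 / cΛ)]
  · linarith [Real.sqrt_nonneg (2 * V 0 / km), Real.sqrt_nonneg (g 0 / cQ)]
end
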